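/- Let τ_L < τ_C and let η(x) = δ(x) − 1{x < τ_L}. If ∫_ℝ (f₁(x) − f₀(x)) η(x) dx = 0, then ∫_ℝ f₁(x) η(x) dx ≥ 0. In the paper's notation, R₁⁻(τ_L) = δ₁ − ∫_{−∞}^{τ_L} f₁ dx ≥ 0. -/
import Mathlib


open MeasureTheory Set

theorem stmt10 (f0 f1 δ : ℝ → ℝ) (τC τL : ℝ)
    (hf0pos : ∀ x, 0 < f0 x) (hf1pos : ∀ x, 0 < f1 x)
    (hf0c : Continuous f0) (hf1c : Continuous f1)
    (hf0i : Integrable f0) (hf1i : Integrable f1)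
    (hmlrp : StrictMono (fun x => f1 x / f0 x))
    (hτC : f1 τC = f0 τC) (hL : τL < τC)
    (hδm : Measurable δ) (hδ0 : ∀ x, 0 ≤ δ x) (hδ1 : ∀ x, δ x ≤ 1)
    (hzero : ∫ x, (f1 x - f0 x) * (δ x - if x < τL then 1 else 0) = 0) :
    0 ≤ ∫ x, f1 x * (δ x - if x < τL then 1 else 0) := by
  set η : ℝ → ℝ := fun x => δ x - if x < τL then 1 else 0 with hη
  have hηm : Measurable η :=
    hδm.sub (Measurable.ite measurableSet_Iio measurable_const measurable_const)
  have hηb : ∀ x, |η x| ≤ 1 := by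
    intro x
    rw [abs_le]
    constructor <;> simp only [hη] <;> split <;>
      first
        | nlinarith [hδ0 x, hδ1 x]
        | nlinarith [hδ0 x, hδ1 x]
  have hi1 : Integrable (fun x => f1 x * η x) := by
    refine hf1i.mono' ((hf1c.measurable.mul hηm).aestronglyMeasurable) ?_
    filter_upwards with x
    rw [norm_mul, Real.norm_eq_abs, Real.norm_eq_abs, abs_of_pos (hf1pos x)]
    nlinarith [hηb x, hf1pos x, abs_nonneg (η x)]
  have hi0 : Integrable (fun x => f0 x * η x) := by
    refine hf0i.mono' ((hf0c.measurable.mul hηm).aestronglyMeasurable) ?_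
    filter_upwards with x
    rw [norm_mul, Real.norm_eq_abs, Real.norm_eq_abs, abs_of_pos (hf0pos x)]
    nlinarith [hηb x, hf0pos x, abs_nonneg (η x)]
  set c : ℝ := f1 τL / f0 τL with hc
  have hc1 : c < 1 := by
    have h := hmlrp hL
    simp only at h
    rwa [hτC, div_self (ne_of_gt (hf0pos τC))] at h
  have hpt : ∀ x, 0 ≤ (f1 x - c * f0 x) * η x := by
    intro x
    by_cases h : x < τL
    · have hη0 : η x ≤ 0 := by
        simp only [hη, h, if_pos]
        linarith [hδ1 x]
      have hlt : f1 x / f0 x < c := hmlrp h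
      have : f1 x < c * f0 x := (div_lt_iff₀ (hf0pos x)).mp hlt
      nlinarith
    · have hηnn : 0 ≤ η x := by
        simp only [hη, h, if_neg, if_false]
        linarith [hδ0 x]
      have hle : c ≤ f1 x / f0 x := hmlrp.le_iff_le.mpr (not_lt.mp h)
      have : c * f0 x ≤ f1 x := (le_div_iff₀ (hf0pos x)).mp hle
      nlinarith
  have key : (0:ℝ) ≤ ∫ x, (f1 x - c * f0 x) * η x := integral_nonneg hpt
  have hsplit : ∫ x, (f1 x - c * f0 x) * η x
      = (∫ x, f1 x * η x) - c * ∫ x, f0 x * η x := by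
    rw [show (fun x => (f1 x - c * f0 x) * η x)
        = fun x => f1 x * η x - c * (f0 x * η x) from by funext x; ring]
    rw [integral_sub hi1 (hi0.const_mul c), MeasureTheory.integral_const_mul]
  have hAB : ∫ x, f1 x * η x = ∫ x, f0 x * η x := by
    simp_rw [sub_mul] at hzero
    rw [integral_sub hi1 hi0] at hzero
    linarith
  rw [hsplit, hAB] at key
  nlinarith [key, hc1]
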